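/- For any nonzero integer a and any integer n ≥ 2, E_{2n,a} ≡ 3a^2 - a - 3a^2 n (mod 9). -/

import Mathlib

open Finset

def EZ (a : ℤ) : ℕ → ℤ
  | 0 => 1
  | n + 1 =>
      -a * ∑ k ∈ (Finset.Icc 1 ((n + 1) / 2)).attach,
        ((n + 1).choose (2 * k.1) : ℤ) * EZ a (n + 1 - 2 * k.1)
  decreasing_by
    have h := Finset.mem_Icc.mp k.2
    omega

/-- split a sum over `range (2n+1)` into even and odd indexed parts -/
lemma split_sum_odd (f : ℕ → ℤ) (n : ℕ) :
    ∑ j ∈ range (2 * n + 1), f j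
      = ∑ k ∈ range (n + 1), f (2 * k) + ∑ k ∈ range n, f (2 * k + 1) := by
  induction n with
  | zero => simp
  | succ n ih =>
      have h1 : 2 * (n + 1) + 1 = (2 * n + 1) + 1 + 1 := by ring
      have e1 : 2 * n + 1 + 1 = 2 * (n + 1) := by ring
      rw [h1, Finset.sum_range_succ, Finset.sum_range_succ, ih,
        Finset.sum_range_succ (fun k => f (2 * k)) (n + 1),
        Finset.sum_range_succ (fun k => f (2 * k + 1)) n, e1]
      ring

/-- split a sum over `range (2n)` into even and odd indexed parts -/
lemma split_sum_even (f : ℕ → ℤ) (n : ℕ) :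
    ∑ j ∈ range (2 * n), f j
      = ∑ k ∈ range n, f (2 * k) + ∑ k ∈ range n, f (2 * k + 1) := by
  induction n with
  | zero => simp
  | succ n ih =>
      have h1 : 2 * (n + 1) = (2 * n) + 1 + 1 := by ring
      rw [h1, Finset.sum_range_succ, Finset.sum_range_succ, ih,
        Finset.sum_range_succ (fun k => f (2 * k)) n,
        Finset.sum_range_succ (fun k => f (2 * k + 1)) n]
      ring

/-- sum of even-index binomial coefficients of row 2n -/
lemma sum_even_choose (n : ℕ) (hn : 1 ≤ n) :
    ∑ k ∈ range (n + 1), ((2 * n).choose (2 * k) : ℤ) = 2 ^ (2 * n - 1) := by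
  have hS : ∑ j ∈ range (2 * n + 1), ((2 * n).choose j : ℤ) = 2 ^ (2 * n) := by
    exact_mod_cast congrArg (Nat.cast : ℕ → ℤ) (Nat.sum_range_choose (2 * n))
  have hA : ∑ j ∈ range (2 * n + 1), (-1 : ℤ) ^ j * ((2 * n).choose j : ℤ) = 0 := by
    rw [Int.alternating_sum_range_choose, if_neg (by omega)]
  have h2 : ∑ j ∈ range (2 * n + 1), ((1 : ℤ) + (-1) ^ j) * ((2 * n).choose j : ℤ)
      = 2 ^ (2 * n) := by
    simp only [add_mul, Finset.sum_add_distrib, one_mul, hS, hA, add_zero]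
  rw [split_sum_odd (fun j => ((1 : ℤ) + (-1) ^ j) * ((2 * n).choose j : ℤ)) n] at h2
  have he : ∀ k, ((1 : ℤ) + (-1) ^ (2 * k)) * ((2 * n).choose (2 * k) : ℤ)
      = 2 * ((2 * n).choose (2 * k) : ℤ) := by
    intro k; rw [pow_mul]; norm_num
  have ho : ∀ k, ((1 : ℤ) + (-1) ^ (2 * k + 1)) * ((2 * n).choose (2 * k + 1) : ℤ) = 0 := by
    intro k; rw [pow_succ, pow_mul]; norm_num
  simp only [he, ho, Finset.sum_const_zero, add_zero, ← Finset.mul_sum] at h2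
  have h3 : (2 : ℤ) ^ (2 * n) = 2 * 2 ^ (2 * n - 1) := by
    rw [← pow_succ']; congr 1; omega
  rw [h3] at h2
  exact mul_left_cancel₀ (by norm_num) h2

/-- sum of odd-index binomial coefficients of row 2n-1 -/
lemma sum_odd_choose (n : ℕ) (hn : 1 ≤ n) :
    ∑ k ∈ range n, ((2 * n - 1).choose (2 * k + 1) : ℤ) = 2 ^ (2 * n - 2) := by
  have h2n : 2 * n - 1 + 1 = 2 * n := by omega
  have hS : ∑ j ∈ range (2 * n), ((2 * n - 1).choose j : ℤ) = 2 ^ (2 * n - 1) := by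
    have := congrArg (Nat.cast : ℕ → ℤ) (Nat.sum_range_choose (2 * n - 1))
    rw [h2n] at this
    exact_mod_cast this
  have hA : ∑ j ∈ range (2 * n), (-1 : ℤ) ^ j * ((2 * n - 1).choose j : ℤ) = 0 := by
    have := @Int.alternating_sum_range_choose (2 * n - 1)
    rw [h2n, if_neg (by omega)] at this
    exact this
  have h2 : ∑ j ∈ range (2 * n), ((1 : ℤ) - (-1) ^ j) * ((2 * n - 1).choose j : ℤ)
      = 2 ^ (2 * n - 1) := by
    simp only [sub_mul, Finset.sum_sub_distrib, one_mul, hS, hA, sub_zero]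
  rw [split_sum_even (fun j => ((1 : ℤ) - (-1) ^ j) * ((2 * n - 1).choose j : ℤ)) n] at h2
  have he : ∀ k, ((1 : ℤ) - (-1) ^ (2 * k)) * ((2 * n - 1).choose (2 * k) : ℤ) = 0 := by
    intro k; rw [pow_mul]; norm_num
  have ho : ∀ k, ((1 : ℤ) - (-1) ^ (2 * k + 1)) * ((2 * n - 1).choose (2 * k + 1) : ℤ)
      = 2 * ((2 * n - 1).choose (2 * k + 1) : ℤ) := by
    intro k; rw [pow_succ, pow_mul]; norm_num
  simp only [he, ho, Finset.sum_const_zero, zero_add, ← Finset.mul_sum] at h2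
  have h3 : (2 : ℤ) ^ (2 * n - 1) = 2 * 2 ^ (2 * n - 2) := by
    rw [← pow_succ']; congr 1; omega
  rw [h3] at h2
  exact mul_left_cancel₀ (by norm_num) h2

/-- weighted sum of even-index binomial coefficients -/
lemma sum_even_choose_mul (n : ℕ) (hn : 1 ≤ n) :
    ∑ k ∈ range (n + 1), (k : ℤ) * ((2 * n).choose (2 * k) : ℤ)
      = n * 2 ^ (2 * n - 2) := by
  have key : ∀ k : ℕ, 2 * (k : ℤ) * ((2 * n).choose (2 * k) : ℤ)
      = 2 * n * ((2 * n - 1).choose (2 * k - 1) : ℤ) ∨ k = 0 := by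
    intro k
    rcases Nat.eq_zero_or_pos k with hk | hk
    · right; exact hk
    · left
      have h1 : 2 * n - 1 + 1 = 2 * n := by omega
      have h2 : 2 * k - 1 + 1 = 2 * k := by omega
      have := Nat.add_one_mul_choose_eq (2 * n - 1) (2 * k - 1)
      rw [h1, h2] at this
      have := congrArg (Nat.cast : ℕ → ℤ) this
      push_cast at this
      linarith [this]
  -- multiply target sum by 2
  have h2B : ∑ k ∈ range (n + 1), 2 * (k : ℤ) * ((2 * n).choose (2 * k) : ℤ)
      = 2 * n * 2 ^ (2 * n - 2) := by
    rw [Finset.sum_range_succ'  (fun k => 2 * (k : ℤ) * ((2 * n).choose (2 * k) : ℤ)) n]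
    simp only [Nat.cast_zero, mul_zero, zero_mul, add_zero]
    have : ∀ i ∈ range n, 2 * ((i + 1 : ℕ) : ℤ) * ((2 * n).choose (2 * (i + 1)) : ℤ)
        = 2 * n * ((2 * n - 1).choose (2 * i + 1) : ℤ) := by
      intro i _
      rcases key (i + 1) with h | h
      · have hidx : 2 * (i + 1) - 1 = 2 * i + 1 := by omega
        rw [hidx] at h
        push_cast at h ⊢
        linarith [h]
      · omega
    rw [Finset.sum_congr rfl this, ← Finset.mul_sum, sum_odd_choose n hn]
  have := h2B
  have hexp : ∀ k ∈ range (n+1), 2 * (k : ℤ) * ((2 * n).choose (2 * k) : ℤ)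
      = 2 * ((k : ℤ) * ((2 * n).choose (2 * k) : ℤ)) := by intro k _; ring
  rw [Finset.sum_congr rfl hexp, ← Finset.mul_sum] at this
  have h4 : 2 * ((n : ℤ) * 2 ^ (2 * n - 2)) = 2 * n * 2 ^ (2 * n - 2) := by ring
  rw [← h4] at this
  exact mul_left_cancel₀ (by norm_num) this

/-- recurrence for even indices -/
lemma EZ_even (a : ℤ) (n : ℕ) (hn : 1 ≤ n) :
    EZ a (2 * n) = -a * ∑ k ∈ Finset.Icc 1 n,
      ((2 * n).choose (2 * k) : ℤ) * EZ a (2 * n - 2 * k) := by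
  have h : 2 * n = (2 * n - 1) + 1 := by omega
  have h2 : (2 * n - 1 + 1) / 2 = n := by omega
  rw [h, EZ, h2]
  rw [Finset.sum_attach (Finset.Icc 1 n)
    (fun k => ((2 * n - 1 + 1).choose (2 * k) : ℤ) * EZ a (2 * n - 1 + 1 - 2 * k))]

lemma pow_two_zmod (n : ℕ) (hn : 1 ≤ n) :
    (2 : ZMod 9) ^ (2 * n - 2) = 7 - 6 * (n : ZMod 9) := by
  induction n with
  | zero => omega
  | succ m ih =>
      rcases Nat.eq_zero_or_pos m with hm | hm
      · subst hm; decide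
      · have h1 : 2 * (m + 1) - 2 = (2 * m - 2) + 2 := by omega
        rw [h1, pow_add, ih hm]
        push_cast
        linear_combination (3 - 2 * (m : ZMod 9)) * (by decide : (9 : ZMod 9) = 0)
        
/-- sum over the middle range -/
lemma sum_mid (n : ℕ) (hn : 1 ≤ n) :
    ∑ k ∈ Finset.Icc 1 (n - 1), ((2 * n).choose (2 * k) : ℤ) = 2 ^ (2 * n - 1) - 2 := by
  have hsplit : ∑ k ∈ range (n + 1), ((2 * n).choose (2 * k) : ℤ)
      = ((2 * n).choose (2 * 0) : ℤ) + ∑ k ∈ Finset.Icc 1 (n - 1), ((2 * n).choose (2 * k) : ℤ)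
        + ((2 * n).choose (2 * n) : ℤ) := by
    have h1 : Finset.Icc 1 (n - 1) = Finset.Ico 1 n := by
      rw [← Finset.Ico_add_one_right_eq_Icc]; congr 1; omega
    rw [h1, Finset.sum_range_succ, Finset.range_eq_Ico,
      Finset.sum_eq_sum_Ico_succ_bot (by omega : 0 < n)]
  rw [sum_even_choose n hn] at hsplit
  simp only [mul_zero, Nat.choose_zero_right, Nat.choose_self, Nat.cast_one] at hsplit
  linarith [hsplit]

lemma sum_mid_mul (n : ℕ) (hn : 1 ≤ n) :
    ∑ k ∈ Finset.Icc 1 (n - 1), (k : ℤ) * ((2 * n).choose (2 * k) : ℤ)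
      = n * 2 ^ (2 * n - 2) - n := by
  have hsplit : ∑ k ∈ range (n + 1), (k : ℤ) * ((2 * n).choose (2 * k) : ℤ)
      = (0 : ℤ) * ((2 * n).choose (2 * 0) : ℤ)
        + ∑ k ∈ Finset.Icc 1 (n - 1), (k : ℤ) * ((2 * n).choose (2 * k) : ℤ)
        + (n : ℤ) * ((2 * n).choose (2 * n) : ℤ) := by
    have h1 : Finset.Icc 1 (n - 1) = Finset.Ico 1 n := by
      rw [← Finset.Ico_add_one_right_eq_Icc]; congr 1; omega
    rw [h1, Finset.sum_range_succ, Finset.range_eq_Ico,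
      Finset.sum_eq_sum_Ico_succ_bot (by omega : 0 < n)]
    norm_num
  rw [sum_even_choose_mul n hn] at hsplit
  simp only [Nat.choose_self, Nat.cast_one, mul_one, zero_mul, zero_add] at hsplit
  linarith [hsplit]

lemma final_identity : ∀ α ν : ZMod 9,
    -α * ((3 * α ^ 2 - α - 3 * α ^ 2 * ν) * (2 * (7 - 6 * ν) - 2)
      + 3 * α ^ 2 * (ν * (7 - 6 * ν) - ν) + 1) = 3 * α ^ 2 - α - 3 * α ^ 2 * ν := by
  decide

theorem key_lemma (a : ℤ) : ∀ n : ℕ, 1 ≤ n →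
    ((EZ a (2 * n) : ZMod 9)) = 3 * (a : ZMod 9) ^ 2 - (a : ZMod 9)
      - 3 * (a : ZMod 9) ^ 2 * (n : ZMod 9) := by
  intro n
  induction n using Nat.strong_induction_on with
  | _ n ih =>
    intro hn
    set α : ZMod 9 := (a : ZMod 9) with hα
    set ν : ZMod 9 := (n : ZMod 9) with hν
    have hrec := EZ_even a n hn
    have hcast : ((EZ a (2 * n) : ZMod 9))
        = -α * ∑ k ∈ Finset.Icc 1 n, ((2 * n).choose (2 * k) : ZMod 9)
            * ((EZ a (2 * n - 2 * k) : ZMod 9)) := by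
      rw [hrec]; push_cast; ring_nf; rw [← hα]; ring
    -- split off the top term k = n
    have htop : ∑ k ∈ Finset.Icc 1 n, ((2 * n).choose (2 * k) : ZMod 9)
            * ((EZ a (2 * n - 2 * k) : ZMod 9))
        = ∑ k ∈ Finset.Icc 1 (n - 1), ((2 * n).choose (2 * k) : ZMod 9)
            * ((EZ a (2 * n - 2 * k) : ZMod 9)) + 1 := by
      have h1 : n = (n - 1) + 1 := by omega
      rw [h1, Finset.sum_Icc_succ_top (by omega : 1 ≤ (n - 1) + 1)]
      rw [← h1]
      have h2 : 2 * n - 2 * n = 0 := by omega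
      rw [h2, Nat.choose_self]
      simp [EZ]
    -- rewrite middle terms using the induction hypothesis
    have hmid : ∀ k ∈ Finset.Icc 1 (n - 1),
        ((2 * n).choose (2 * k) : ZMod 9) * ((EZ a (2 * n - 2 * k) : ZMod 9))
        = (3 * α ^ 2 - α - 3 * α ^ 2 * ν) * ((2 * n).choose (2 * k) : ZMod 9)
          + 3 * α ^ 2 * (((2 * n).choose (2 * k) : ZMod 9) * (k : ZMod 9)) := by
      intro k hk
      rw [Finset.mem_Icc] at hk
      have hk1 : 1 ≤ n - k := by omega
      have hk2 : n - k < n := by omega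
      have he : 2 * n - 2 * k = 2 * (n - k) := by omega
      rw [he, ih (n - k) hk2 hk1]
      have hcast2 : ((n - k : ℕ) : ZMod 9) = ν - (k : ZMod 9) := by
        rw [hν]
        have : ((n - k : ℕ) : ZMod 9) = ((n : ℕ) : ZMod 9) - ((k : ℕ) : ZMod 9) := by
          have h3 : (n - k) + k = n := by omega
          have h4 := congrArg (Nat.cast : ℕ → ZMod 9) h3
          push_cast at h4
          linear_combination h4
        exact this
      rw [hcast2]
      ring
    rw [hcast, htop, Finset.sum_congr rfl hmid, Finset.sum_add_distrib,
      ← Finset.mul_sum, ← Finset.mul_sum]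
    -- evaluate the two binomial sums mod 9
    have hS1 : ∑ k ∈ Finset.Icc 1 (n - 1), ((2 * n).choose (2 * k) : ZMod 9)
        = 2 * (7 - 6 * ν) - 2 := by
      have := congrArg (Int.cast : ℤ → ZMod 9) (sum_mid n hn)
      push_cast at this
      rw [this]
      have hp : (2 : ZMod 9) ^ (2 * n - 1) = 2 * (2 : ZMod 9) ^ (2 * n - 2) := by
        rw [← pow_succ']; congr 1; omega
      rw [hp, pow_two_zmod n hn, hν]
    have hS2 : ∑ k ∈ Finset.Icc 1 (n - 1),
          ((2 * n).choose (2 * k) : ZMod 9) * (k : ZMod 9)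
        = ν * (7 - 6 * ν) - ν := by
      have := congrArg (Int.cast : ℤ → ZMod 9) (sum_mid_mul n hn)
      push_cast at this
      rw [show ∑ k ∈ Finset.Icc 1 (n - 1),
            ((2 * n).choose (2 * k) : ZMod 9) * (k : ZMod 9)
          = ∑ k ∈ Finset.Icc 1 (n - 1), (k : ZMod 9) * ((2 * n).choose (2 * k) : ZMod 9) from
        Finset.sum_congr rfl (fun k _ => by ring)]
      rw [this, pow_two_zmod n hn, hν]
    rw [hS1, hS2]
    exact final_identity α ν

theorem stmt19 (a : ℤ) (ha : a ≠ 0) (n : ℕ) (hn : 2 ≤ n) :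
    EZ a (2 * n) ≡ 3 * a ^ 2 - a - 3 * a ^ 2 * n [ZMOD 9] := by
  have h := key_lemma a n (by omega)
  have h2 : ((EZ a (2 * n) : ZMod 9))
      = (((3 * a ^ 2 - a - 3 * a ^ 2 * (n : ℤ)) : ℤ) : ZMod 9) := by
    push_cast
    rw [h]
  have h3 := (ZMod.intCast_eq_intCast_iff _ _ 9).mp h2
  exact_mod_cast h3
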